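/- Let n ≥ 2, k, l, λ be integers with l ≥ λ, 2λ ≥ l, λ ≥ 0, and k ≥ 3l − 2λ, k > 0. Then there exists a probability mass function p : {0,1}^n → ℝ (i.e., p(x) ≥ 0 for all x and ∑_{x ∈ {0,1}^n} p(x) = 1) such that ∑_{x : x_j = 1} p(x) = l/k for every j ∈ {1,…,n} and ∑_{x : x_i = 1 and x_j = 1} p(x) = λ/k for every pair 1 ≤ i < j ≤ n. In particular, the function defined by p(0^n) = 1 + (2λ−3l)/k + (l−λ)/(k·2^{n−2}), p(1^n) = (1/k)(2λ − l + (l−λ)/2^{n−2}), and p(x) = (l−λ)/(k·2^{n−2}) for all other x ∈ {0,1}^n is such a probability mass function. -/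

import Mathlib

lemma cardsub2 {n : ℕ} (i j : Fin n) (hij : i ≠ j) :
    Fintype.card {t : Fin n // ¬(t = i ∨ t = j)} = n - 2 := by
  rw [Fintype.card_subtype_compl]
  have : Fintype.card {t : Fin n // t = i ∨ t = j} = 2 := by
    rw [Fintype.card_subtype]
    have : (Finset.univ.filter (fun t : Fin n => t = i ∨ t = j)) = {i, j} := by
      ext t; simp
    rw [this, Finset.card_insert_of_notMem (by simpa using hij), Finset.card_singleton]
  simp [this]

lemma card1 {n : ℕ} (i : Fin n) :
    (Finset.univ.filter (fun x : Fin n → Bool => x i = true)).card = 2 ^ (n - 1) := by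
  rw [← Fintype.card_subtype]
  have e : {x : Fin n → Bool // x i = true} ≃ ({t : Fin n // t ≠ i} → Bool) :=
    { toFun := fun x t => x.1 t.1
      invFun := fun y => ⟨fun t => if h : t = i then true else y ⟨t, h⟩, by simp⟩
      left_inv := by
        rintro ⟨x, hx⟩
        ext t; dsimp; split
        · subst ‹t = i›; exact hx.symm
        · rfl
      right_inv := by intro y; ext ⟨t, ht⟩; simp [ht] }
  rw [Fintype.card_congr e, Fintype.card_fun, Fintype.card_bool]
  congr 1
  have : Fintype.card {t : Fin n // ¬ (t = i)} = n - 1 := by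
    rw [Fintype.card_subtype_compl, Fintype.card_subtype_eq, Fintype.card_fin]
  simpa using this

lemma card2 {n : ℕ} (i j : Fin n) (hij : i ≠ j) :
    (Finset.univ.filter (fun x : Fin n → Bool => x i = true ∧ x j = true)).card = 2 ^ (n - 2) := by
  rw [← Fintype.card_subtype]
  have e : {x : Fin n → Bool // x i = true ∧ x j = true} ≃ ({t : Fin n // ¬(t = i ∨ t = j)} → Bool) :=
    { toFun := fun x t => x.1 t.1
      invFun := fun y => ⟨fun t => if h : t = i ∨ t = j then true else y ⟨t, h⟩,
        by constructor <;> simp [hij]⟩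
      left_inv := by
        rintro ⟨x, hx1, hx2⟩
        ext t; dsimp; split
        · rcases ‹t = i ∨ t = j› with h | h <;> subst h <;> simp [hx1, hx2]
        · rfl
      right_inv := by intro y; ext ⟨t, ht⟩; simp [ht] }
  rw [Fintype.card_congr e, Fintype.card_fun, Fintype.card_bool, cardsub2 i j hij]

/-- for `n ≥ 2` and integers `k, l, λ` with `l ≥ λ`, `2λ ≥ l`, `λ ≥ 0`,
`k ≥ 3l − 2λ`, `k > 0`, the explicit function `p` (with value `α` at the all-zero
string, `γ` at the all-one string, and `β` elsewhere) is a probability mass function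
on `{0,1}^n` with single marginals `l/k` and pairwise marginals `λ/k`. -/
theorem stmt2 (n : ℕ) (hn : 2 ≤ n) (k l lam : ℤ)
    (h1 : lam ≤ l) (h2 : l ≤ 2 * lam) (h3 : 0 ≤ lam) (h4 : 3 * l - 2 * lam ≤ k)
    (h5 : 0 < k)
    (p : (Fin n → Bool) → ℝ)
    (hp : p = fun x : Fin n → Bool =>
      if x = (fun _ => false) then
        1 + (2 * (lam : ℝ) - 3 * (l : ℝ)) / (k : ℝ) +
          ((l : ℝ) - (lam : ℝ)) / ((k : ℝ) * 2 ^ (n - 2))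
      else if x = (fun _ => true) then
        (1 / (k : ℝ)) * (2 * (lam : ℝ) - (l : ℝ) + ((l : ℝ) - (lam : ℝ)) / 2 ^ (n - 2))
      else ((l : ℝ) - (lam : ℝ)) / ((k : ℝ) * 2 ^ (n - 2))) :
    (∀ x, 0 ≤ p x) ∧
    (∑ x : Fin n → Bool, p x) = 1 ∧
    (∀ j : Fin n,
      ∑ x ∈ Finset.univ.filter (fun x : Fin n → Bool => x j = true), p x = (l : ℝ) / (k : ℝ)) ∧
    (∀ i j : Fin n, i < j →
      ∑ x ∈ Finset.univ.filter (fun x : Fin n → Bool => x i = true ∧ x j = true), p x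
        = (lam : ℝ) / (k : ℝ)) := by
  obtain ⟨m, rfl⟩ : ∃ m, n = m + 2 := ⟨n - 2, by omega⟩
  have hk : (0 : ℝ) < (k : ℝ) := by exact_mod_cast h5
  have hk0 : (k : ℝ) ≠ 0 := ne_of_gt hk
  have h2m : (0 : ℝ) < (2 : ℝ) ^ m := by positivity
  have h2m0 : ((2 : ℝ) ^ m) ≠ 0 := ne_of_gt h2m
  have hll : (lam : ℝ) ≤ (l : ℝ) := by exact_mod_cast h1
  have hl2 : (l : ℝ) ≤ 2 * (lam : ℝ) := by exact_mod_cast h2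
  have hl3 : (0 : ℝ) ≤ (lam : ℝ) := by exact_mod_cast h3
  have hl4 : 3 * (l : ℝ) - 2 * (lam : ℝ) ≤ (k : ℝ) := by exact_mod_cast h4
  set B : ℝ := ((l : ℝ) - (lam : ℝ)) / ((k : ℝ) * 2 ^ m) with hB
  set A : ℝ := 1 + (2 * (lam : ℝ) - 3 * (l : ℝ)) / (k : ℝ) + B with hA
  set C : ℝ := (1 / (k : ℝ)) * (2 * (lam : ℝ) - (l : ℝ) + ((l : ℝ) - (lam : ℝ)) / 2 ^ m) with hC
  have hm2 : m + 2 - 2 = m := by omega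
  have x01 : (fun _ : Fin (m + 2) => false) ≠ (fun _ => true) := by
    intro h
    exact absurd (congrFun h ⟨0, by omega⟩) (by simp)
  have hpv : ∀ x : Fin (m + 2) → Bool, p x =
      B + (if x = (fun _ => false) then A - B else 0) +
        (if x = (fun _ => true) then C - B else 0) := by
    intro x
    rw [hp, hm2]
    by_cases h0 : x = (fun _ => false)
    · simp [h0, x01, hA]; ring
    · by_cases h1' : x = (fun _ => true)
      · simp [h0, h1', Ne.symm x01, hC]
      · simp [h0, h1', hB]
  have hB0 : 0 ≤ B := div_nonneg (by linarith) (mul_pos hk h2m).le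
  have hC0 : 0 ≤ C := by
    apply mul_nonneg (one_div_nonneg.mpr hk.le)
    have : 0 ≤ ((l : ℝ) - (lam : ℝ)) / 2 ^ m := div_nonneg (by linarith) h2m.le
    linarith
  have hA0 : 0 ≤ A := by
    have h1'' : (3 * (l : ℝ) - 2 * (lam : ℝ)) / (k : ℝ) ≤ 1 := by
      rw [div_le_one hk]; linarith
    have h' : (2 * (lam : ℝ) - 3 * (l : ℝ)) / (k : ℝ)
        = -((3 * (l : ℝ) - 2 * (lam : ℝ)) / (k : ℝ)) := by ring
    rw [hA, h']; linarith
  have hsum : ∀ s : Finset (Fin (m + 2) → Bool),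
      ∑ x ∈ s, p x = s.card * B +
        (if (fun _ : Fin (m + 2) => false) ∈ s then A - B else 0) +
        (if (fun _ : Fin (m + 2) => true) ∈ s then C - B else 0) := by
    intro s
    rw [Finset.sum_congr rfl (fun x _ => hpv x)]
    rw [Finset.sum_add_distrib, Finset.sum_add_distrib, Finset.sum_const,
      Finset.sum_ite_eq' s _ (fun _ => A - B), Finset.sum_ite_eq' s _ (fun _ => C - B)]
    push_cast
    ring
  refine ⟨?_, ?_, ?_, ?_⟩
  · intro x
    rw [hpv x]
    by_cases h0 : x = (fun _ => false)
    · rw [if_pos h0, if_neg (by rw [h0]; exact x01)]; linarith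
    · rw [if_neg h0]
      by_cases h1' : x = (fun _ => true)
      · rw [if_pos h1']; linarith
      · rw [if_neg h1']; linarith
  · rw [hsum]
    have hcard : (Finset.univ : Finset (Fin (m + 2) → Bool)).card = 2 ^ (m + 2) := by
      simp
    rw [hcard]
    simp only [Finset.mem_univ, if_true]
    have hpow : ((2 : ℝ) ^ (m + 2) : ℝ) = 4 * 2 ^ m := by ring
    push_cast
    rw [hpow, hA, hC, hB]
    field_simp
    ring
  · intro j
    rw [hsum, card1]
    have hmem0 : (fun _ : Fin (m + 2) => false) ∉
        Finset.univ.filter (fun x : Fin (m + 2) → Bool => x j = true) := by simp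
    have hmem1 : (fun _ : Fin (m + 2) => true) ∈
        Finset.univ.filter (fun x : Fin (m + 2) → Bool => x j = true) := by simp
    rw [if_neg hmem0, if_pos hmem1]
    have h21 : m + 2 - 1 = m + 1 := by omega
    rw [h21]
    have hpow : ((2 : ℝ) ^ (m + 1) : ℝ) = 2 * 2 ^ m := by ring
    push_cast
    rw [hpow, hC, hB]
    field_simp
    ring
  · intro i j hij
    rw [hsum, card2 i j (ne_of_lt hij)]
    have hmem0 : (fun _ : Fin (m + 2) => false) ∉
        Finset.univ.filter (fun x : Fin (m + 2) → Bool => x i = true ∧ x j = true) := by simp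
    have hmem1 : (fun _ : Fin (m + 2) => true) ∈
        Finset.univ.filter (fun x : Fin (m + 2) → Bool => x i = true ∧ x j = true) := by simp
    rw [if_neg hmem0, if_pos hmem1, hm2]
    push_cast
    rw [hC, hB]
    field_simp
    ring
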